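/- Soundness: for all sets Γ, Δ of formulas, every formula φ, and each sign * ∈ {+,−}, if Γ;Δ ⊢*_{N2Int*} φ then Γ;Δ ⊩* φ. -/
import Mathlib


/-- Signs: `pos` for proof/assertion, `neg` for refutation/rejection. -/
inductive Sign where
  | pos
  | neg
deriving DecidableEq

/-- The dual of a sign. -/
def Sign.dual : Sign → Sign
  | .pos => .neg
  | .neg => .pos

/-- Formulas of the bilateral logic 2Int. -/
inductive Form where
  | atom : ℕ → Form
  | bot : Form
  | top : Form
  | and : Form → Form → Form
  | or : Form → Form → Form
  | imp : Form → Form → Form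
  | coimp : Form → Form → Form
deriving DecidableEq

/-- A premise of an atomic rule: the sign required (proof or refutation), the premise atom,
and the sets of dischargeable atomic proof assumptions and refutation assumptions. -/
structure Premise where
  sign : Sign
  concl : ℕ
  dischargePf : Set ℕ
  dischargeRf : Set ℕ

/-- An atomic rule: a list of premises, a marking as proof (`pos`) or refutation (`neg`) rule,
and an atomic conclusion. -/
structure AtomicRule where
  prems : List Premise
  sign : Sign
  concl : ℕ

/-- A bilateral atomic system (base) is a set of atomic rules. -/
abbrev Base := Set AtomicRule

/-- `AtDeriv B s Γ Δ p` formalizes `Γ;Δ ⊢^s_B p`: there is a deduction in `B` of the atom `p`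
whose open atomic proof assumptions are contained in `Γ` and open atomic refutation
assumptions in `Δ`, consisting of a single assumption of sign `s` or ending with a rule of
sign `s`. -/
inductive AtDeriv (B : Base) : Sign → Set ℕ → Set ℕ → ℕ → Prop
  | hypPos {Γ Δ : Set ℕ} {p : ℕ} : p ∈ Γ → AtDeriv B .pos Γ Δ p
  | hypNeg {Γ Δ : Set ℕ} {p : ℕ} : p ∈ Δ → AtDeriv B .neg Γ Δ p
  | app {Γ Δ : Set ℕ} {R : AtomicRule} (hR : R ∈ B)
      (h : ∀ pr ∈ R.prems,
        AtDeriv B pr.sign (Γ ∪ pr.dischargePf) (Δ ∪ pr.dischargeRf) pr.concl) :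
      AtDeriv B R.sign Γ Δ R.concl

/-- Bilateral validity (support) `⊩^s_B φ`, by recursion on the formula. -/
def Supp : Form → Base → Sign → Prop
  | .atom p, B, s => AtDeriv B s ∅ ∅ p
  | .bot, B, .pos => ∀ p : ℕ, AtDeriv B .pos ∅ ∅ p ∧ AtDeriv B .neg ∅ ∅ p
  | .bot, _, .neg => True
  | .top, _, .pos => True
  | .top, B, .neg => ∀ p : ℕ, AtDeriv B .pos ∅ ∅ p ∧ AtDeriv B .neg ∅ ∅ p
  | .and φ ψ, B, .pos => Supp φ B .pos ∧ Supp ψ B .pos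
  | .and φ ψ, B, .neg => ∀ C : Base, B ⊆ C → ∀ p : ℕ,
      (((∀ D : Base, C ⊆ D → Supp φ D .neg → AtDeriv D .pos ∅ ∅ p) ∧
        (∀ D : Base, C ⊆ D → Supp ψ D .neg → AtDeriv D .pos ∅ ∅ p)) →
        AtDeriv C .pos ∅ ∅ p) ∧
      (((∀ D : Base, C ⊆ D → Supp φ D .neg → AtDeriv D .neg ∅ ∅ p) ∧
        (∀ D : Base, C ⊆ D → Supp ψ D .neg → AtDeriv D .neg ∅ ∅ p)) →
        AtDeriv C .neg ∅ ∅ p)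
  | .or φ ψ, B, .pos => ∀ C : Base, B ⊆ C → ∀ p : ℕ,
      (((∀ D : Base, C ⊆ D → Supp φ D .pos → AtDeriv D .pos ∅ ∅ p) ∧
        (∀ D : Base, C ⊆ D → Supp ψ D .pos → AtDeriv D .pos ∅ ∅ p)) →
        AtDeriv C .pos ∅ ∅ p) ∧
      (((∀ D : Base, C ⊆ D → Supp φ D .pos → AtDeriv D .neg ∅ ∅ p) ∧
        (∀ D : Base, C ⊆ D → Supp ψ D .pos → AtDeriv D .neg ∅ ∅ p)) →
        AtDeriv C .neg ∅ ∅ p)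
  | .or φ ψ, B, .neg => Supp φ B .neg ∧ Supp ψ B .neg
  | .imp φ ψ, B, .pos => ∀ C : Base, B ⊆ C → Supp φ C .pos → Supp ψ C .pos
  | .imp φ ψ, B, .neg => Supp φ B .pos ∧ Supp ψ B .neg
  | .coimp φ ψ, B, .pos => Supp φ B .pos ∧ Supp ψ B .neg
  | .coimp φ ψ, B, .neg => ∀ C : Base, B ⊆ C → Supp ψ C .neg → Supp φ C .neg

open Classical in
/-- `Cons B Γ Δ s χ` formalizes `Γ;Δ ⊩^s_B χ`. -/
def Cons (B : Base) (Γ Δ : Set Form) (s : Sign) (χ : Form) : Prop :=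
  if Γ = ∅ ∧ Δ = ∅ then Supp χ B s
  else ∀ C : Base, B ⊆ C →
    (∀ φ ∈ Γ, Supp φ C .pos) → (∀ ψ ∈ Δ, Supp ψ C .neg) → Supp χ C s

/-- `Γ;Δ ⊩^s χ` : consequence in every base. -/
def Valid (Γ Δ : Set Form) (s : Sign) (χ : Form) : Prop :=
  ∀ B : Base, Cons B Γ Δ s χ

/-- Natural deduction for 2Int: `ND true` is N2Int*, `ND false` is N2Int. -/
inductive ND (star : Bool) : Set Form → Set Form → Sign → Form → Prop
  | hypPos {Γ Δ : Set Form} {φ : Form} : φ ∈ Γ → ND star Γ Δ .pos φ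
  | hypNeg {Γ Δ : Set Form} {φ : Form} : φ ∈ Δ → ND star Γ Δ .neg φ
  | topI {Γ Δ : Set Form} : ND star Γ Δ .pos .top
  | botI {Γ Δ : Set Form} : ND star Γ Δ .neg .bot
  | andI {Γ Δ : Set Form} {φ ψ : Form} : ND star Γ Δ .pos φ → ND star Γ Δ .pos ψ →
      ND star Γ Δ .pos (φ.and ψ)
  | andE1 {Γ Δ : Set Form} {φ ψ : Form} : ND star Γ Δ .pos (φ.and ψ) → ND star Γ Δ .pos φ
  | andE2 {Γ Δ : Set Form} {φ ψ : Form} : ND star Γ Δ .pos (φ.and ψ) → ND star Γ Δ .pos ψ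
  | orI1 {Γ Δ : Set Form} {φ ψ : Form} : ND star Γ Δ .pos φ → ND star Γ Δ .pos (φ.or ψ)
  | orI2 {Γ Δ : Set Form} {φ ψ : Form} : ND star Γ Δ .pos ψ → ND star Γ Δ .pos (φ.or ψ)
  | impI {Γ Δ : Set Form} {φ ψ : Form} : ND star (insert φ Γ) Δ .pos ψ → ND star Γ Δ .pos (φ.imp ψ)
  | impE {Γ Δ : Set Form} {φ ψ : Form} : ND star Γ Δ .pos (φ.imp ψ) → ND star Γ Δ .pos φ →
      ND star Γ Δ .pos ψ
  | coimpI {Γ Δ : Set Form} {φ ψ : Form} : ND star Γ Δ .pos φ → ND star Γ Δ .neg ψ →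
      ND star Γ Δ .pos (φ.coimp ψ)
  | coimpE1 {Γ Δ : Set Form} {φ ψ : Form} : ND star Γ Δ .pos (φ.coimp ψ) → ND star Γ Δ .pos φ
  | coimpE2 {Γ Δ : Set Form} {φ ψ : Form} : ND star Γ Δ .pos (φ.coimp ψ) → ND star Γ Δ .neg ψ
  | orIneg {Γ Δ : Set Form} {φ ψ : Form} : ND star Γ Δ .neg φ → ND star Γ Δ .neg ψ →
      ND star Γ Δ .neg (φ.or ψ)
  | orE1neg {Γ Δ : Set Form} {φ ψ : Form} : ND star Γ Δ .neg (φ.or ψ) → ND star Γ Δ .neg φ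
  | orE2neg {Γ Δ : Set Form} {φ ψ : Form} : ND star Γ Δ .neg (φ.or ψ) → ND star Γ Δ .neg ψ
  | andI1neg {Γ Δ : Set Form} {φ ψ : Form} : ND star Γ Δ .neg φ → ND star Γ Δ .neg (φ.and ψ)
  | andI2neg {Γ Δ : Set Form} {φ ψ : Form} : ND star Γ Δ .neg ψ → ND star Γ Δ .neg (φ.and ψ)
  | coimpIneg {Γ Δ : Set Form} {φ ψ : Form} : ND star Γ (insert ψ Δ) .neg φ →
      ND star Γ Δ .neg (φ.coimp ψ)
  | coimpEneg {Γ Δ : Set Form} {φ ψ : Form} : ND star Γ Δ .neg (φ.coimp ψ) → ND star Γ Δ .neg ψ →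
      ND star Γ Δ .neg φ
  | impIneg {Γ Δ : Set Form} {φ ψ : Form} : ND star Γ Δ .pos φ → ND star Γ Δ .neg ψ →
      ND star Γ Δ .neg (φ.imp ψ)
  | impE1neg {Γ Δ : Set Form} {φ ψ : Form} : ND star Γ Δ .neg (φ.imp ψ) → ND star Γ Δ .pos φ
  | impE2neg {Γ Δ : Set Form} {φ ψ : Form} : ND star Γ Δ .neg (φ.imp ψ) → ND star Γ Δ .neg ψ
  | orE {Γ Δ : Set Form} {φ ψ χ : Form} {s : Sign} (hs : star = true ∨ s = Sign.pos) :
      ND star Γ Δ .pos (φ.or ψ) → ND star (insert φ Γ) Δ s χ →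
      ND star (insert ψ Γ) Δ s χ → ND star Γ Δ s χ
  | botE {Γ Δ : Set Form} {χ : Form} {s : Sign} (hs : star = true ∨ s = Sign.pos) :
      ND star Γ Δ .pos .bot → ND star Γ Δ s χ
  | andEneg {Γ Δ : Set Form} {φ ψ χ : Form} {s : Sign} (hs : star = true ∨ s = Sign.neg) :
      ND star Γ Δ .neg (φ.and ψ) → ND star Γ (insert φ Δ) s χ →
      ND star Γ (insert ψ Δ) s χ → ND star Γ Δ s χ
  | topEneg {Γ Δ : Set Form} {χ : Form} {s : Sign} (hs : star = true ∨ s = Sign.neg) :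
      ND star Γ Δ .neg .top → ND star Γ Δ s χ


lemma atDeriv_mono {B C : Base} (h : B ⊆ C) {s : Sign} {Γ Δ : Set ℕ} {p : ℕ}
    (d : AtDeriv B s Γ Δ p) : AtDeriv C s Γ Δ p := by
  induction d with
  | hypPos h' => exact .hypPos h'
  | hypNeg h' => exact .hypNeg h'
  | app hR _ ih => exact .app (h hR) ih

lemma supp_mono : ∀ (χ : Form) (s : Sign) {B C : Base}, B ⊆ C → Supp χ B s → Supp χ C s := by
  intro χ
  induction χ with
  | atom p => intro s B C h hs; exact atDeriv_mono h hs
  | bot =>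
    intro s B C h hs
    cases s with
    | pos => exact fun p => ⟨atDeriv_mono h (hs p).1, atDeriv_mono h (hs p).2⟩
    | neg => trivial
  | top =>
    intro s B C h hs
    cases s with
    | pos => trivial
    | neg => exact fun p => ⟨atDeriv_mono h (hs p).1, atDeriv_mono h (hs p).2⟩
  | and φ ψ ihφ ihψ =>
    intro s B C h hs
    cases s with
    | pos => exact ⟨ihφ _ h hs.1, ihψ _ h hs.2⟩
    | neg => exact fun D hD p => hs D (h.trans hD) p
  | or φ ψ ihφ ihψ =>
    intro s B C h hs
    cases s with
    | pos => exact fun D hD p => hs D (h.trans hD) p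
    | neg => exact ⟨ihφ _ h hs.1, ihψ _ h hs.2⟩
  | imp φ ψ ihφ ihψ =>
    intro s B C h hs
    cases s with
    | pos => exact fun D hD hφ => hs D (h.trans hD) hφ
    | neg => exact ⟨ihφ _ h hs.1, ihψ _ h hs.2⟩
  | coimp φ ψ ihφ ihψ =>
    intro s B C h hs
    cases s with
    | pos => exact ⟨ihφ _ h hs.1, ihψ _ h hs.2⟩
    | neg => exact fun D hD hψ => hs D (h.trans hD) hψ

lemma supp_explosion : ∀ (χ : Form) (s : Sign) (B : Base),
    (∀ p, AtDeriv B .pos ∅ ∅ p ∧ AtDeriv B .neg ∅ ∅ p) → Supp χ B s := by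
  intro χ
  induction χ with
  | atom p =>
    intro s B h
    cases s with
    | pos => exact (h p).1
    | neg => exact (h p).2
  | bot =>
    intro s B h
    cases s with
    | pos => exact h
    | neg => trivial
  | top =>
    intro s B h
    cases s with
    | pos => trivial
    | neg => exact h
  | and φ ψ ihφ ihψ =>
    intro s B h
    cases s with
    | pos => exact ⟨ihφ _ B h, ihψ _ B h⟩
    | neg =>
      exact fun D hD p =>
        ⟨fun _ => atDeriv_mono hD (h p).1, fun _ => atDeriv_mono hD (h p).2⟩
  | or φ ψ ihφ ihψ =>
    intro s B h
    cases s with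
    | pos =>
      exact fun D hD p =>
        ⟨fun _ => atDeriv_mono hD (h p).1, fun _ => atDeriv_mono hD (h p).2⟩
    | neg => exact ⟨ihφ _ B h, ihψ _ B h⟩
  | imp φ ψ ihφ ihψ =>
    intro s B h
    cases s with
    | pos =>
      exact fun D hD _ =>
        ihψ .pos D (fun p => ⟨atDeriv_mono hD (h p).1, atDeriv_mono hD (h p).2⟩)
    | neg => exact ⟨ihφ _ B h, ihψ _ B h⟩
  | coimp φ ψ ihφ ihψ =>
    intro s B h
    cases s with
    | pos => exact ⟨ihφ _ B h, ihψ _ B h⟩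
    | neg =>
      exact fun D hD _ =>
        ihφ .neg D (fun p => ⟨atDeriv_mono hD (h p).1, atDeriv_mono hD (h p).2⟩)

/-- The common shape of `Supp (φ ∨ ψ) B .pos` (when `t = .pos`) and
`Supp (φ ∧ ψ) B .neg` (when `t = .neg`). -/
def OrLike (t : Sign) (φ ψ : Form) (C : Base) : Prop :=
  ∀ D : Base, C ⊆ D → ∀ p : ℕ,
    (((∀ E : Base, D ⊆ E → Supp φ E t → AtDeriv E .pos ∅ ∅ p) ∧
      (∀ E : Base, D ⊆ E → Supp ψ E t → AtDeriv E .pos ∅ ∅ p)) → AtDeriv D .pos ∅ ∅ p) ∧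
    (((∀ E : Base, D ⊆ E → Supp φ E t → AtDeriv E .neg ∅ ∅ p) ∧
      (∀ E : Base, D ⊆ E → Supp ψ E t → AtDeriv E .neg ∅ ∅ p)) → AtDeriv D .neg ∅ ∅ p)

lemma orLike_or {φ ψ : Form} {B : Base} (h : Supp (φ.or ψ) B .pos) : OrLike .pos φ ψ B := h

lemma orLike_and {φ ψ : Form} {B : Base} (h : Supp (φ.and ψ) B .neg) : OrLike .neg φ ψ B := h

lemma genE (t : Sign) (φ ψ : Form) : ∀ (χ : Form) (s : Sign) (C : Base),
    OrLike t φ ψ C →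
    (∀ D : Base, C ⊆ D → Supp φ D t → Supp χ D s) →
    (∀ D : Base, C ⊆ D → Supp ψ D t → Supp χ D s) →
    Supp χ C s := by
  intro χ
  induction χ with
  | atom p =>
    intro s C h hφ hψ
    cases s with
    | pos => exact (h C (subset_refl _) p).1 ⟨hφ, hψ⟩
    | neg => exact (h C (subset_refl _) p).2 ⟨hφ, hψ⟩
  | bot =>
    intro s C h hφ hψ
    cases s with
    | pos =>
      intro p
      exact ⟨(h C (subset_refl _) p).1
          ⟨fun E hE hs => ((hφ E hE hs) p).1, fun E hE hs => ((hψ E hE hs) p).1⟩,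
        (h C (subset_refl _) p).2
          ⟨fun E hE hs => ((hφ E hE hs) p).2, fun E hE hs => ((hψ E hE hs) p).2⟩⟩
    | neg => trivial
  | top =>
    intro s C h hφ hψ
    cases s with
    | pos => trivial
    | neg =>
      intro p
      exact ⟨(h C (subset_refl _) p).1
          ⟨fun E hE hs => ((hφ E hE hs) p).1, fun E hE hs => ((hψ E hE hs) p).1⟩,
        (h C (subset_refl _) p).2
          ⟨fun E hE hs => ((hφ E hE hs) p).2, fun E hE hs => ((hψ E hE hs) p).2⟩⟩
  | and χ₁ χ₂ ih₁ ih₂ =>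
    intro s C h hφ hψ
    cases s with
    | pos =>
      exact ⟨ih₁ .pos C h (fun D hD hs => (hφ D hD hs).1) (fun D hD hs => (hψ D hD hs).1),
        ih₂ .pos C h (fun D hD hs => (hφ D hD hs).2) (fun D hD hs => (hψ D hD hs).2)⟩
    | neg =>
      intro D hD p
      constructor
      · intro H
        exact (h D hD p).1
          ⟨fun E hE hs => (hφ E (hD.trans hE) hs E (subset_refl _) p).1
              ⟨fun F hF h' => H.1 F (hE.trans hF) h', fun F hF h' => H.2 F (hE.trans hF) h'⟩,
           fun E hE hs => (hψ E (hD.trans hE) hs E (subset_refl _) p).1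
              ⟨fun F hF h' => H.1 F (hE.trans hF) h', fun F hF h' => H.2 F (hE.trans hF) h'⟩⟩
      · intro H
        exact (h D hD p).2
          ⟨fun E hE hs => (hφ E (hD.trans hE) hs E (subset_refl _) p).2
              ⟨fun F hF h' => H.1 F (hE.trans hF) h', fun F hF h' => H.2 F (hE.trans hF) h'⟩,
           fun E hE hs => (hψ E (hD.trans hE) hs E (subset_refl _) p).2
              ⟨fun F hF h' => H.1 F (hE.trans hF) h', fun F hF h' => H.2 F (hE.trans hF) h'⟩⟩
  | or χ₁ χ₂ ih₁ ih₂ =>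
    intro s C h hφ hψ
    cases s with
    | pos =>
      intro D hD p
      constructor
      · intro H
        exact (h D hD p).1
          ⟨fun E hE hs => (hφ E (hD.trans hE) hs E (subset_refl _) p).1
              ⟨fun F hF h' => H.1 F (hE.trans hF) h', fun F hF h' => H.2 F (hE.trans hF) h'⟩,
           fun E hE hs => (hψ E (hD.trans hE) hs E (subset_refl _) p).1
              ⟨fun F hF h' => H.1 F (hE.trans hF) h', fun F hF h' => H.2 F (hE.trans hF) h'⟩⟩
      · intro H
        exact (h D hD p).2
          ⟨fun E hE hs => (hφ E (hD.trans hE) hs E (subset_refl _) p).2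
              ⟨fun F hF h' => H.1 F (hE.trans hF) h', fun F hF h' => H.2 F (hE.trans hF) h'⟩,
           fun E hE hs => (hψ E (hD.trans hE) hs E (subset_refl _) p).2
              ⟨fun F hF h' => H.1 F (hE.trans hF) h', fun F hF h' => H.2 F (hE.trans hF) h'⟩⟩
    | neg =>
      exact ⟨ih₁ .neg C h (fun D hD hs => (hφ D hD hs).1) (fun D hD hs => (hψ D hD hs).1),
        ih₂ .neg C h (fun D hD hs => (hφ D hD hs).2) (fun D hD hs => (hψ D hD hs).2)⟩
  | imp χ₁ χ₂ ih₁ ih₂ =>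
    intro s C h hφ hψ
    cases s with
    | pos =>
      intro D hD h1
      exact ih₂ .pos D (fun E hE => h E (hD.trans hE))
        (fun E hE hs => hφ E (hD.trans hE) hs E (subset_refl _) (supp_mono χ₁ .pos hE h1))
        (fun E hE hs => hψ E (hD.trans hE) hs E (subset_refl _) (supp_mono χ₁ .pos hE h1))
    | neg =>
      exact ⟨ih₁ .pos C h (fun D hD hs => (hφ D hD hs).1) (fun D hD hs => (hψ D hD hs).1),
        ih₂ .neg C h (fun D hD hs => (hφ D hD hs).2) (fun D hD hs => (hψ D hD hs).2)⟩
  | coimp χ₁ χ₂ ih₁ ih₂ =>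
    intro s C h hφ hψ
    cases s with
    | pos =>
      exact ⟨ih₁ .pos C h (fun D hD hs => (hφ D hD hs).1) (fun D hD hs => (hψ D hD hs).1),
        ih₂ .neg C h (fun D hD hs => (hφ D hD hs).2) (fun D hD hs => (hψ D hD hs).2)⟩
    | neg =>
      intro D hD h2
      exact ih₁ .neg D (fun E hE => h E (hD.trans hE))
        (fun E hE hs => hφ E (hD.trans hE) hs E (subset_refl _) (supp_mono χ₂ .neg hE h2))
        (fun E hE hs => hψ E (hD.trans hE) hs E (subset_refl _) (supp_mono χ₂ .neg hE h2))

lemma sound' {Γ Δ : Set Form} {s : Sign} {φ : Form} (h : ND true Γ Δ s φ) :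
    ∀ C : Base, (∀ γ ∈ Γ, Supp γ C .pos) → (∀ δ ∈ Δ, Supp δ C .neg) → Supp φ C s := by
  induction h with
  | hypPos h' => exact fun C hΓ _ => hΓ _ h'
  | hypNeg h' => exact fun C _ hΔ => hΔ _ h'
  | topI => exact fun _ _ _ => trivial
  | botI => exact fun _ _ _ => trivial
  | andI _ _ ih1 ih2 => exact fun C hΓ hΔ => ⟨ih1 C hΓ hΔ, ih2 C hΓ hΔ⟩
  | andE1 _ ih => exact fun C hΓ hΔ => (ih C hΓ hΔ).1
  | andE2 _ ih => exact fun C hΓ hΔ => (ih C hΓ hΔ).2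
  | @orI1 _ _ φ' ψ' _ ih =>
    intro C hΓ hΔ D hD p
    exact ⟨fun H => H.1 D (subset_refl _) (supp_mono φ' .pos hD (ih C hΓ hΔ)),
      fun H => H.1 D (subset_refl _) (supp_mono φ' .pos hD (ih C hΓ hΔ))⟩
  | @orI2 _ _ φ' ψ' _ ih =>
    intro C hΓ hΔ D hD p
    exact ⟨fun H => H.2 D (subset_refl _) (supp_mono ψ' .pos hD (ih C hΓ hΔ)),
      fun H => H.2 D (subset_refl _) (supp_mono ψ' .pos hD (ih C hΓ hΔ))⟩
  | @impI _ _ φ' ψ' _ ih =>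
    intro C hΓ hΔ D hD hφD
    refine ih D (fun γ hγ => ?_) (fun δ hδ => supp_mono δ .neg hD (hΔ δ hδ))
    rcases Set.mem_insert_iff.mp hγ with rfl | hγ
    · exact hφD
    · exact supp_mono γ .pos hD (hΓ γ hγ)
  | impE _ _ ih1 ih2 =>
    exact fun C hΓ hΔ => ih1 C hΓ hΔ C (subset_refl _) (ih2 C hΓ hΔ)
  | coimpI _ _ ih1 ih2 => exact fun C hΓ hΔ => ⟨ih1 C hΓ hΔ, ih2 C hΓ hΔ⟩
  | coimpE1 _ ih => exact fun C hΓ hΔ => (ih C hΓ hΔ).1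
  | coimpE2 _ ih => exact fun C hΓ hΔ => (ih C hΓ hΔ).2
  | orIneg _ _ ih1 ih2 => exact fun C hΓ hΔ => ⟨ih1 C hΓ hΔ, ih2 C hΓ hΔ⟩
  | orE1neg _ ih => exact fun C hΓ hΔ => (ih C hΓ hΔ).1
  | orE2neg _ ih => exact fun C hΓ hΔ => (ih C hΓ hΔ).2
  | @andI1neg _ _ φ' ψ' _ ih =>
    intro C hΓ hΔ D hD p
    exact ⟨fun H => H.1 D (subset_refl _) (supp_mono φ' .neg hD (ih C hΓ hΔ)),
      fun H => H.1 D (subset_refl _) (supp_mono φ' .neg hD (ih C hΓ hΔ))⟩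
  | @andI2neg _ _ φ' ψ' _ ih =>
    intro C hΓ hΔ D hD p
    exact ⟨fun H => H.2 D (subset_refl _) (supp_mono ψ' .neg hD (ih C hΓ hΔ)),
      fun H => H.2 D (subset_refl _) (supp_mono ψ' .neg hD (ih C hΓ hΔ))⟩
  | @coimpIneg _ _ φ' ψ' _ ih =>
    intro C hΓ hΔ D hD hψD
    refine ih D (fun γ hγ => supp_mono γ .pos hD (hΓ γ hγ)) (fun δ hδ => ?_)
    rcases Set.mem_insert_iff.mp hδ with rfl | hδ
    · exact hψD
    · exact supp_mono δ .neg hD (hΔ δ hδ)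
  | coimpEneg _ _ ih1 ih2 =>
    exact fun C hΓ hΔ => ih1 C hΓ hΔ C (subset_refl _) (ih2 C hΓ hΔ)
  | impIneg _ _ ih1 ih2 => exact fun C hΓ hΔ => ⟨ih1 C hΓ hΔ, ih2 C hΓ hΔ⟩
  | impE1neg _ ih => exact fun C hΓ hΔ => (ih C hΓ hΔ).1
  | impE2neg _ ih => exact fun C hΓ hΔ => (ih C hΓ hΔ).2
  | @orE _ _ φ' ψ' χ' s' _ _ _ _ ihmaj ih1 ih2 =>
    intro C hΓ hΔ
    refine genE .pos φ' ψ' χ' s' C (orLike_or (ihmaj C hΓ hΔ)) ?_ ?_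
    · intro D hD hs
      refine ih1 D (fun γ hγ => ?_) (fun δ hδ => supp_mono δ .neg hD (hΔ δ hδ))
      rcases Set.mem_insert_iff.mp hγ with rfl | hγ
      · exact hs
      · exact supp_mono γ .pos hD (hΓ γ hγ)
    · intro D hD hs
      refine ih2 D (fun γ hγ => ?_) (fun δ hδ => supp_mono δ .neg hD (hΔ δ hδ))
      rcases Set.mem_insert_iff.mp hγ with rfl | hγ
      · exact hs
      · exact supp_mono γ .pos hD (hΓ γ hγ)
  | @botE _ _ χ' s' _ _ ih =>
    exact fun C hΓ hΔ => supp_explosion χ' s' C (ih C hΓ hΔ)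
  | @andEneg _ _ φ' ψ' χ' s' _ _ _ _ ihmaj ih1 ih2 =>
    intro C hΓ hΔ
    refine genE .neg φ' ψ' χ' s' C (orLike_and (ihmaj C hΓ hΔ)) ?_ ?_
    · intro D hD hs
      refine ih1 D (fun γ hγ => supp_mono γ .pos hD (hΓ γ hγ)) (fun δ hδ => ?_)
      rcases Set.mem_insert_iff.mp hδ with rfl | hδ
      · exact hs
      · exact supp_mono δ .neg hD (hΔ δ hδ)
    · intro D hD hs
      refine ih2 D (fun γ hγ => supp_mono γ .pos hD (hΓ γ hγ)) (fun δ hδ => ?_)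
      rcases Set.mem_insert_iff.mp hδ with rfl | hδ
      · exact hs
      · exact supp_mono δ .neg hD (hΔ δ hδ)
  | @topEneg _ _ χ' s' _ _ ih =>
    exact fun C hΓ hΔ => supp_explosion χ' s' C (ih C hΓ hΔ)

theorem soundness (Γ Δ : Set Form) (φ : Form) (s : Sign)
    (h : ND true Γ Δ s φ) : Valid Γ Δ s φ := by
  intro B
  by_cases hE : Γ = ∅ ∧ Δ = ∅
  · rw [Cons, if_pos hE]
    exact sound' h B (fun γ hγ => by simp [hE.1] at hγ) (fun δ hδ => by simp [hE.2] at hδ)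
  · rw [Cons, if_neg hE]
    exact fun C _ hΓ hΔ => sound' h C hΓ hΔ
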